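/- Let M be a projective module over the polynomial ring R[t] (R a commutative ring) and s ∈ M. Embed M as a direct summand of a free R[t]-module M' with basis B; write s = Σ_{b∈B} s_b · b with s_b ∈ R[t], and let {s_{b,i} ∈ R} be the coefficients of all the polynomials s_b. Then for any R-algebra R', the image of s in M ⊗_{R[t]} R'[t] vanishes if and only if every s_{b,i} maps to zero in R'. Consequently, the locus where the section s vanishes is a closed subscheme of Spec R. -/
import Mathlib


noncomputable section

variable (R R' : Type*) [CommRing R] [CommRing R'] [Algebra R R']

/-- `R'[t]` as an `R[t]`-algebra, via the map induced by `R → R'`. -/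
instance polyAlg : Algebra (Polynomial R) (Polynomial R') :=
  (Polynomial.mapRingHom (algebraMap R R')).toAlgebra

/-- Let `M` be a projective module over `R[t]` and `s ∈ M`.  Embed `M` as a
direct summand of a free `R[t]`-module with basis `B` (an embedding `ι` with a
retraction `π`); the coordinates of `s` are the polynomials `ι s b`, whose
coefficients are the elements `s_{b,i} ∈ R`.  Then for any `R`-algebra `R'`,
the image of `s` in `M ⊗_{R[t]} R'[t]` vanishes if and only if every
coefficient `s_{b,i}` maps to zero in `R'` (Drinfeld's sublemma, algebraic
form). -/
theorem stmt_13
    (M : Type*) [AddCommGroup M] [Module (Polynomial R) M]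
    [Module.Projective (Polynomial R) M]
    (B : Type*) (ι : M →ₗ[Polynomial R] (B →₀ Polynomial R))
    (π : (B →₀ Polynomial R) →ₗ[Polynomial R] M)
    (hretr : ∀ x : M, π (ι x) = x) (s : M) :
    (s ⊗ₜ[Polynomial R] (1 : Polynomial R')
        = (0 : TensorProduct (Polynomial R) M (Polynomial R'))) ↔
      ∀ (b : B) (i : ℕ), algebraMap R R' ((ι s b).coeff i) = 0 := by
  classical
  have hsmul : ∀ p : Polynomial R, p • (1 : Polynomial R')
      = Polynomial.map (algebraMap R R') p := by
    intro p
    rw [Algebra.smul_def, mul_one]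
    rfl
  have key : ∀ b : B, (TensorProduct.finsuppScalarLeft (Polynomial R) (Polynomial R') B)
      ((LinearMap.rTensor (Polynomial R') ι) (s ⊗ₜ[Polynomial R] 1)) b
      = Polynomial.map (algebraMap R R') (ι s b) := by
    intro b
    rw [LinearMap.rTensor_tmul, TensorProduct.finsuppScalarLeft_apply_tmul_apply, hsmul]
  constructor
  · intro h b i
    have hk := key b
    rw [h] at hk
    simp only [map_zero, Finsupp.coe_zero, Pi.zero_apply] at hk
    have h2 : (Polynomial.map (algebraMap R R') (ι s b)).coeff i = 0 := by
      rw [← hk]; rfl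
    rwa [Polynomial.coeff_map] at h2
  · intro h
    have h0 : (TensorProduct.finsuppScalarLeft (Polynomial R) (Polynomial R') B)
        ((LinearMap.rTensor (Polynomial R') ι) (s ⊗ₜ[Polynomial R] 1)) = 0 := by
      refine Finsupp.ext fun b => ?_
      rw [key b]
      refine Polynomial.ext fun i => ?_
      rw [Polynomial.coeff_map, h b i]
      simp
    calc s ⊗ₜ[Polynomial R] (1 : Polynomial R')
        = (LinearMap.rTensor (Polynomial R') π)
            ((LinearMap.rTensor (Polynomial R') ι) (s ⊗ₜ[Polynomial R] 1)) := by
          rw [LinearMap.rTensor_tmul, LinearMap.rTensor_tmul, hretr]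
      _ = (LinearMap.rTensor (Polynomial R') π)
            ((TensorProduct.finsuppScalarLeft (Polynomial R) (Polynomial R') B).symm
              ((TensorProduct.finsuppScalarLeft (Polynomial R) (Polynomial R') B)
                ((LinearMap.rTensor (Polynomial R') ι) (s ⊗ₜ[Polynomial R] 1)))) := by
          rw [LinearEquiv.symm_apply_apply]
      _ = 0 := by rw [h0, LinearEquiv.map_zero, LinearMap.map_zero]

end
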